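/- arXiv:2211.02841 — 2 statements merged into one kernel-verified Lean document; each statement's English description precedes it below -/
import Mathlib

section
/- Let A ∈ ℂ^{n1×n2×n3} and G ∈ ℂ^{n2×n1×n3}. If A is invertible along G, then A^{∥G} = G *_c (G *_c A *_c G)^† *_c G, where (G *_c A *_c G)^† is the Moore-Penrose inverse of G *_c A *_c G. -/
noncomputable section

/-- A third-order tensor: a family of frontal slices. -/
abbrev Tensor (n1 n2 n3 : ℕ) : Type := Fin n3 → Matrix (Fin n1) (Fin n2) ℂ

namespace Tensor

/-- The block Toeplitz-plus-Hankel matrix `mat(A)` associated to a tensor. -/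
def matT {n1 n2 n3 : ℕ} (A : Tensor n1 n2 n3) :
    Matrix (Fin n3 × Fin n1) (Fin n3 × Fin n2) ℂ := fun p q =>
  A ⟨p.1.1 - q.1.1 + (q.1.1 - p.1.1), by
        have h1 := p.1.isLt; have h2 := q.1.isLt; omega⟩ p.2 q.2 +
    (if h : p.1.1 + q.1.1 + 2 ≤ n3 then A ⟨p.1.1 + q.1.1 + 1, by omega⟩ p.2 q.2
     else if h2 : n3 ≤ p.1.1 + q.1.1 then
       A ⟨2 * n3 - (p.1.1 + q.1.1) - 1, by have h1 := p.1.isLt; omega⟩ p.2 q.2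
     else 0)

/-- `ten`, the inverse of `mat` on its range: the slices of a tensor are recovered
from the first block-column of its `mat` by an alternating sum. -/
def tenT {n1 n2 n3 : ℕ} (M : Matrix (Fin n3 × Fin n1) (Fin n3 × Fin n2) ℂ) :
    Tensor n1 n2 n3 := fun i => Matrix.of fun a b =>
  ∑ t : Fin n3, if i.1 ≤ t.1 then (-1 : ℂ) ^ (t.1 - i.1) * M (t, a) (⟨0, i.pos⟩, b) else 0

/-- The C-product of two tensors: the unique tensor whose `mat` is `mat(A) * mat(B)`. -/
def cmul {n1 n2 l n3 : ℕ} (A : Tensor n1 n2 n3) (B : Tensor n2 l n3) : Tensor n1 l n3 :=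
  tenT (matT A * matT B)

/-- The conjugate transpose of a tensor, taken slice-wise. -/
def conjT {n1 n2 n3 : ℕ} (A : Tensor n1 n2 n3) : Tensor n2 n1 n3 := fun i => (A i).conjTranspose

/-- The identity tensor: the tensor whose `mat` is the identity matrix. -/
def idT {n n3 : ℕ} : Tensor n n n3 := fun i => if i.1 = 0 then 1 else 0

/-- A tensor is unitary if `Qᴴ *c Q = Q *c Qᴴ = I`. -/
def Unitary {n n3 : ℕ} (Q : Tensor n n n3) : Prop :=
  cmul (conjT Q) Q = idT ∧ cmul Q (conjT Q) = idT

/-- `X` is the inverse of the square tensor `B` under the C-product. -/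
def IsInverse {n n3 : ℕ} (B X : Tensor n n n3) : Prop :=
  cmul B X = idT ∧ cmul X B = idT

/-- `X` is the Moore-Penrose inverse of `A` under the C-product. -/
def IsMP {n1 n2 n3 : ℕ} (A : Tensor n1 n2 n3) (X : Tensor n2 n1 n3) : Prop :=
  cmul (cmul A X) A = A ∧ cmul (cmul X A) X = X ∧
    conjT (cmul A X) = cmul A X ∧ conjT (cmul X A) = cmul X A

/-- Powers of a square tensor with respect to the C-product. -/
def cpow {n n3 : ℕ} (A : Tensor n n n3) : ℕ → Tensor n n n3
  | 0 => idT
  | m + 1 => cmul (cpow A m) A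

/-- `ind(A) = k`: `k` is the smallest nonnegative integer with
`rank(mat(A)^k) = rank(mat(A)^(k+1))`. -/
def IsIndex {n n3 : ℕ} (A : Tensor n n n3) (k : ℕ) : Prop :=
  (matT A ^ k).rank = (matT A ^ (k + 1)).rank ∧
    ∀ j < k, (matT A ^ j).rank ≠ (matT A ^ (j + 1)).rank

/-- `X` is the Drazin inverse of `A` (of index `k`) under the C-product. -/
def IsDrazin {n n3 : ℕ} (A : Tensor n n n3) (k : ℕ) (X : Tensor n n n3) : Prop :=
  cmul (cpow A (k + 1)) X = cpow A k ∧ cmul (cmul X A) X = X ∧ cmul A X = cmul X A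

/-- `X` is an inverse of `A` along `G` under the C-product. -/
def IsInvAlong {n1 n2 n3 : ℕ} (A : Tensor n1 n2 n3) (G X : Tensor n2 n1 n3) : Prop :=
  cmul (cmul X A) G = G ∧ cmul (cmul G A) X = G ∧
    (∃ U : Tensor n1 n1 n3, X = cmul G U) ∧
    (∃ V : Tensor n2 n2 n3, conjT X = cmul (conjT G) V)

/-- All frontal slices are diagonal. -/
def FDiag {n1 n2 n3 : ℕ} (A : Tensor n1 n2 n3) : Prop :=
  ∀ (i : Fin n3) (a : Fin n1) (b : Fin n2), (a : ℕ) ≠ (b : ℕ) → A i a b = 0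

/-- All frontal slices are upper triangular. -/
def FUpper {n1 n2 n3 : ℕ} (A : Tensor n1 n2 n3) : Prop :=
  ∀ (i : Fin n3) (a : Fin n1) (b : Fin n2), (b : ℕ) < (a : ℕ) → A i a b = 0

/-- All frontal slices are lower triangular. -/
def FLower {n1 n2 n3 : ℕ} (A : Tensor n1 n2 n3) : Prop :=
  ∀ (i : Fin n3) (a : Fin n1) (b : Fin n2), (a : ℕ) < (b : ℕ) → A i a b = 0

/-- Slice-wise 2×2 block tensor `[[A, B],[C, D]]`. -/
def blockT {r s t u n3 : ℕ} (A : Tensor r t n3) (B : Tensor r u n3)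
    (C : Tensor s t n3) (D : Tensor s u n3) : Tensor (r + s) (t + u) n3 := fun i =>
  Matrix.reindex finSumFinEquiv finSumFinEquiv (Matrix.fromBlocks (A i) (B i) (C i) (D i))

/-- The mode-3 product of a tensor with an `n3 × n3` matrix. -/
def mode3 {n1 n2 n3 : ℕ} (A : Tensor n1 n2 n3) (M : Matrix (Fin n3) (Fin n3) ℂ) :
    Tensor n1 n2 n3 := fun l => ∑ i, M l i • A i

end Tensor

open Tensor
namespace CProof
open Tensor Finset

variable {n1 n2 l n3 : ℕ}

/-- Folded index into `[0, n3]`. -/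
def foldI (n3 : ℕ) (z : ZMod (2*n3)) : ℕ := min z.val (2*n3 - z.val)

/-- The even periodic extension of the slices of a tensor. -/
def eT (A : Tensor n1 n2 n3) (z : ZMod (2*n3)) : Matrix (Fin n1) (Fin n2) ℂ :=
  if h : foldI n3 z < n3 then A ⟨foldI n3 z, h⟩ else 0

lemma foldI_neg (h3 : 0 < n3) (z : ZMod (2*n3)) : foldI n3 (-z) = foldI n3 z := by
  haveI : NeZero (2*n3) := ⟨by omega⟩
  rcases eq_or_ne z 0 with rfl | hz
  · simp
  · have hv := ZMod.val_lt z
    have hv0 : z.val ≠ 0 := fun h => hz ((ZMod.val_eq_zero z).1 h)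
    rw [foldI, foldI, ZMod.neg_val, if_neg hz]
    omega

lemma eT_neg (h3 : 0 < n3) (A : Tensor n1 n2 n3) (z : ZMod (2*n3)) :
    eT A (-z) = eT A z := by
  rw [eT, eT]
  simp only [foldI_neg h3]

lemma eT_natCast (h3 : 0 < n3) (A : Tensor n1 n2 n3) (u : ℕ) (hu : u ≤ n3) :
    eT A (↑u : ZMod (2*n3)) = if h : u < n3 then A ⟨u, h⟩ else 0 := by
  haveI : NeZero (2*n3) := ⟨by omega⟩
  have hf : foldI n3 (↑u : ZMod (2*n3)) = u := by
    rw [foldI, ZMod.val_cast_of_lt (by omega)]; omega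
  rw [eT]
  simp only [hf]

lemma val_sub_cast (h3 : 0 < n3) (i j : ℕ) (hi : i < n3) (hj : j < n3) :
    ((↑i - ↑j : ZMod (2*n3))).val = if j ≤ i then i - j else 2*n3 - (j - i) := by
  haveI : NeZero (2*n3) := ⟨by omega⟩
  rcases le_or_gt j i with h | h
  · rw [if_pos h, ← Nat.cast_sub h, ZMod.val_cast_of_lt (by omega)]
  · rw [if_neg (by omega)]
    have he : (↑i - ↑j : ZMod (2*n3)) = -(↑(j - i) : ZMod (2*n3)) := by
      rw [Nat.cast_sub h.le]; ring
    have hne : (↑(j - i) : ZMod (2*n3)) ≠ 0 := by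
      intro hc
      have hv := ZMod.val_cast_of_lt (show j - i < 2*n3 by omega)
      rw [hc, ZMod.val_zero] at hv; omega
    rw [he, ZMod.neg_val, if_neg hne, ZMod.val_cast_of_lt (by omega)]

lemma val_add_one_cast (h3 : 0 < n3) (i j : ℕ) (hi : i < n3) (hj : j < n3) :
    ((↑i + ↑j + 1 : ZMod (2*n3))).val = i + j + 1 := by
  haveI : NeZero (2*n3) := ⟨by omega⟩
  have h : (↑i + ↑j + 1 : ZMod (2*n3)) = ((i + j + 1 : ℕ) : ZMod (2*n3)) := by push_cast; ring
  rw [h, ZMod.val_cast_of_lt (by omega)]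

lemma foldI_sub (h3 : 0 < n3) (i j : ℕ) (hi : i < n3) (hj : j < n3) :
    foldI n3 (↑i - ↑j : ZMod (2*n3)) = i - j + (j - i) := by
  rw [foldI, val_sub_cast h3 i j hi hj]
  split_ifs with h <;> omega

/-- Entries of `matT` via the folded extension. -/
lemma matT_apply (A : Tensor n1 n2 n3) (i j : Fin n3) (a : Fin n1) (b : Fin n2) :
    matT A (i, a) (j, b)
      = (eT A ((↑i.1 : ZMod (2*n3)) - ↑j.1) + eT A (↑i.1 + ↑j.1 + 1)) a b := by
  have h3 : 0 < n3 := i.pos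
  haveI : NeZero (2*n3) := ⟨by omega⟩
  have hi := i.isLt; have hj := j.isLt
  rw [Matrix.add_apply]
  have hT : eT A ((↑i.1 : ZMod (2*n3)) - ↑j.1) a b
      = A ⟨i.1 - j.1 + (j.1 - i.1), by omega⟩ a b := by
    simp only [eT, foldI_sub h3 i.1 j.1 hi hj]
    rw [dif_pos (by omega : i.1 - j.1 + (j.1 - i.1) < n3)]
  have hfold : foldI n3 ((↑i.1 : ZMod (2*n3)) + ↑j.1 + 1)
      = min (i.1 + j.1 + 1) (2*n3 - (i.1 + j.1 + 1)) := by
    rw [foldI, val_add_one_cast h3 i.1 j.1 hi hj]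
  have hH : eT A ((↑i.1 : ZMod (2*n3)) + ↑j.1 + 1) a b
      = (if _ : i.1 + j.1 + 2 ≤ n3 then A ⟨i.1 + j.1 + 1, by omega⟩ a b
         else if _ : n3 ≤ i.1 + j.1 then A ⟨2*n3 - (i.1 + j.1) - 1, by omega⟩ a b
         else 0) := by
    simp only [eT, hfold]
    rcases Nat.lt_trichotomy (i.1 + j.1 + 1) n3 with hc | hc | hc
    · rw [dif_pos (by omega), dif_pos (by omega)]
      have : min (i.1 + j.1 + 1) (2*n3 - (i.1 + j.1 + 1)) = i.1 + j.1 + 1 := by omega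
      congr 1 <;> simp [this]
    · rw [dif_neg (by omega), dif_neg (by omega), dif_neg (by omega)]
      simp
    · rw [dif_pos (by omega), dif_neg (by omega), dif_pos (by omega)]
      have : min (i.1 + j.1 + 1) (2*n3 - (i.1 + j.1 + 1)) = 2*n3 - (i.1 + j.1) - 1 := by omega
      congr 1 <;> simp [this]
  rw [hT, hH]
  simp only [matT]

/-- Sum over `ZMod (2*n3)` as a range sum. -/
lemma zmod_sum_range {α : Type*} [AddCommMonoid α] [NeZero (2*n3)] (F : ZMod (2*n3) → α) :
    ∑ t : ZMod (2*n3), F t = ∑ u ∈ range (2*n3), F ↑u := by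
  refine Finset.sum_nbij' (fun (z : ZMod (2*n3)) => z.val) (fun u => (↑u : ZMod (2*n3)))
    ?_ ?_ ?_ ?_ ?_
  · intro z _; exact mem_range.2 (ZMod.val_lt z)
  · intro u _; exact mem_univ _
  · intro z _; exact ZMod.natCast_rightInverse z
  · intro u hu; exact ZMod.val_cast_of_lt (mem_range.1 hu)
  · intro z _; rw [ZMod.natCast_rightInverse z]

/-- Sum over `ZMod (2*n3)` split into `[0,n3)` and its reflection. -/
lemma zmod_sum_split {α : Type*} [AddCommMonoid α] [NeZero (2*n3)] (h3 : 0 < n3)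
    (F : ZMod (2*n3) → α) :
    ∑ t : ZMod (2*n3), F t = ∑ u ∈ range n3, (F ↑u + F (-(↑u + 1))) := by
  rw [zmod_sum_range, range_eq_Ico,
    ← Finset.sum_Ico_consecutive (fun u => F ↑u) (Nat.zero_le n3) (by omega : n3 ≤ 2*n3),
    ← range_eq_Ico, Finset.sum_Ico_eq_sum_range,
    show 2*n3 - n3 = n3 by omega]
  rw [Finset.sum_add_distrib]
  congr 1
  rw [← Finset.sum_range_reflect (fun k => F ↑(n3 + k)) n3]
  apply Finset.sum_congr rfl
  intro u hu
  have hu' := mem_range.1 hu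
  have harg : n3 + (n3 - 1 - u) = 2*n3 - (u + 1) := by omega
  rw [harg]
  have hc : ((2*n3 - (u+1) : ℕ) : ZMod (2*n3)) = -(↑u + 1) := by
    rw [Nat.cast_sub (by omega), ZMod.natCast_self, zero_sub]
    push_cast
    ring
  rw [hc]

/-- Convolution of the folded extensions. -/
def convT (A : Tensor n1 n2 n3) (B : Tensor n2 l n3) (z : ZMod (2*n3)) :
    Matrix (Fin n1) (Fin l) ℂ :=
  ∑ u ∈ range (2*n3), eT A (z - ↑u) * eT B ↑u

lemma convT_eq_zmod [NeZero (2*n3)] (A : Tensor n1 n2 n3) (B : Tensor n2 l n3)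
    (z : ZMod (2*n3)) :
    convT A B z = ∑ t : ZMod (2*n3), eT A (z - t) * eT B t :=
  (zmod_sum_range (fun t => eT A (z - t) * eT B t)).symm

lemma convT_shift [NeZero (2*n3)] (A : Tensor n1 n2 n3) (B : Tensor n2 l n3)
    (z r : ZMod (2*n3)) :
    convT A B z = ∑ t : ZMod (2*n3), eT A (z - (t - r)) * eT B (t - r) := by
  rw [convT_eq_zmod]
  exact Fintype.sum_equiv (Equiv.addRight r)
    (fun t => eT A (z - t) * eT B t)
    (fun t => eT A (z - (t - r)) * eT B (t - r))
    (fun t => by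
      have h : (t + r - r : ZMod (2*n3)) = t := by ring
      simp only [Equiv.coe_addRight, h])

lemma convT_neg [NeZero (2*n3)] (h3 : 0 < n3) (A : Tensor n1 n2 n3) (B : Tensor n2 l n3)
    (z : ZMod (2*n3)) :
    convT A B (-z) = convT A B z := by
  rw [convT_eq_zmod, convT_eq_zmod]
  apply Fintype.sum_equiv (Equiv.neg _)
  intro t
  simp only [Equiv.neg_apply]
  rw [show -z - t = -(z + t) by ring, eT_neg h3 A (z + t), show z - -t = z + t by ring,
    eT_neg h3 B t]

/-- Entries of a product of two `matT`s. -/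
lemma matT_mul_apply (A : Tensor n1 n2 n3) (B : Tensor n2 l n3) (i j : Fin n3)
    (a : Fin n1) (b : Fin l) :
    (matT A * matT B) (i, a) (j, b)
      = (convT A B ((↑i.1 : ZMod (2*n3)) - ↑j.1) + convT A B (↑i.1 + ↑j.1 + 1)) a b := by
  have h3 : 0 < n3 := i.pos
  haveI : NeZero (2*n3) := ⟨by omega⟩
  rw [Matrix.mul_apply, Fintype.sum_prod_type]
  have step : ∀ t : Fin n3, ∑ c : Fin n2, matT A (i, a) (t, c) * matT B (t, c) (j, b)
      = ((eT A ((↑i.1 : ZMod (2*n3)) - ↑t.1) + eT A (↑i.1 + ↑t.1 + 1))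
          * (eT B ((↑t.1 : ZMod (2*n3)) - ↑j.1) + eT B (↑t.1 + ↑j.1 + 1))) a b := by
    intro t
    rw [Matrix.mul_apply]
    exact Finset.sum_congr rfl fun c _ => by rw [matT_apply, matT_apply]
  have key : ∑ t : Fin n3,
      (eT A ((↑i.1 : ZMod (2*n3)) - ↑t.1) + eT A (↑i.1 + ↑t.1 + 1))
        * (eT B ((↑t.1 : ZMod (2*n3)) - ↑j.1) + eT B (↑t.1 + ↑j.1 + 1))
      = ∑ u ∈ range n3,
      (eT A ((↑i.1 : ZMod (2*n3)) - ↑u) + eT A (↑i.1 + ↑u + 1))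
        * (eT B ((↑u : ZMod (2*n3)) - ↑j.1) + eT B (↑u + ↑j.1 + 1)) :=
    Fin.sum_univ_eq_sum_range
      (fun u => (eT A ((↑i.1 : ZMod (2*n3)) - ↑u) + eT A (↑i.1 + ↑u + 1))
        * (eT B ((↑u : ZMod (2*n3)) - ↑j.1) + eT B (↑u + ↑j.1 + 1))) n3
  have c1 : convT A B ((↑i.1 : ZMod (2*n3)) - ↑j.1)
      = ∑ u ∈ range n3,
        (eT A ((↑i.1 : ZMod (2*n3)) - ↑u) * eT B ((↑u : ZMod (2*n3)) - ↑j.1)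
          + eT A (↑i.1 + ↑u + 1) * eT B (↑u + ↑j.1 + 1)) := by
    rw [convT_shift A B _ (↑j.1 : ZMod (2*n3)), zmod_sum_split h3]
    apply Finset.sum_congr rfl
    intro u _
    congr 1
    · rw [show ((↑i.1 : ZMod (2*n3)) - ↑j.1 - (↑u - ↑j.1)) = ↑i.1 - ↑u by ring]
    · rw [show ((↑i.1 : ZMod (2*n3)) - ↑j.1 - (-(↑u + 1) - ↑j.1)) = ↑i.1 + ↑u + 1 by ring,
        show ((-(↑u + 1) - ↑j.1 : ZMod (2*n3))) = -(↑u + ↑j.1 + 1) by ring, eT_neg h3]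
  have c2 : convT A B ((↑i.1 : ZMod (2*n3)) + ↑j.1 + 1)
      = ∑ u ∈ range n3,
        (eT A ((↑i.1 : ZMod (2*n3)) - ↑u) * eT B (↑u + ↑j.1 + 1)
          + eT A (↑i.1 + ↑u + 1) * eT B ((↑u : ZMod (2*n3)) - ↑j.1)) := by
    rw [convT_shift A B _ (-(↑j.1 + 1) : ZMod (2*n3)), zmod_sum_split h3]
    apply Finset.sum_congr rfl
    intro u _
    congr 1
    · rw [show ((↑i.1 : ZMod (2*n3)) + ↑j.1 + 1 - (↑u - -(↑j.1 + 1))) = ↑i.1 - ↑u by ring,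
        show ((↑u : ZMod (2*n3)) - -(↑j.1 + 1)) = ↑u + ↑j.1 + 1 by ring]
    · rw [show ((↑i.1 : ZMod (2*n3)) + ↑j.1 + 1 - (-(↑u + 1) - -(↑j.1 + 1))) = ↑i.1 + ↑u + 1 by ring,
        show ((-(↑u + 1) - -(↑j.1 + 1) : ZMod (2*n3))) = -(↑u - ↑j.1) by ring, eT_neg h3]
  have H : (∑ t : Fin n3,
      (eT A ((↑i.1 : ZMod (2*n3)) - ↑t.1) + eT A (↑i.1 + ↑t.1 + 1))
        * (eT B ((↑t.1 : ZMod (2*n3)) - ↑j.1) + eT B (↑t.1 + ↑j.1 + 1)))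
      = convT A B ((↑i.1 : ZMod (2*n3)) - ↑j.1) + convT A B (↑i.1 + ↑j.1 + 1) := by
    rw [key, c1, c2, ← Finset.sum_add_distrib]
    apply Finset.sum_congr rfl
    intro u _
    rw [Matrix.add_mul, Matrix.mul_add, Matrix.mul_add]
    abel
  rw [Finset.sum_congr rfl fun t _ => step t, ← H]
  exact (Matrix.sum_apply a b Finset.univ _).symm

lemma neg_one_pow_mod (a b : ℕ) (h : a % 2 = b % 2) : ((-1 : ℂ)) ^ a = (-1) ^ b := by
  rw [neg_one_pow_eq_pow_mod_two (n := a), neg_one_pow_eq_pow_mod_two (n := b), h]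

/-- The corrected product tensor. -/
def prodT (A : Tensor n1 n2 n3) (B : Tensor n2 l n3) : Tensor n1 l n3 :=
  fun k => convT A B ↑k.1 - ((-1 : ℂ) ^ (k.1 + n3)) • convT A B ↑n3

lemma eT_prodT (h3 : 0 < n3) (A : Tensor n1 n2 n3) (B : Tensor n2 l n3) (z : ZMod (2*n3)) :
    eT (prodT A B) z = convT A B z - ((-1 : ℂ) ^ (z.val + n3)) • convT A B ↑n3 := by
  haveI : NeZero (2*n3) := ⟨by omega⟩
  have hv := ZMod.val_lt z
  have hzz : ((z.val : ℕ) : ZMod (2*n3)) = z := ZMod.natCast_rightInverse z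
  rcases Nat.lt_trichotomy (z.val) n3 with hc | hc | hc
  · have hf : foldI n3 z = z.val := by rw [foldI]; omega
    rw [eT]
    simp only [hf]
    rw [dif_pos (by omega : z.val < n3)]
    simp only [prodT]
    rw [hzz]
  · have hf : foldI n3 z = n3 := by rw [foldI]; omega
    rw [eT]
    simp only [hf]
    rw [dif_neg (lt_irrefl n3)]
    rw [hc] at hzz
    rw [hc, ← hzz,
      show ((-1 : ℂ)) ^ (n3 + n3) = 1 from Even.neg_one_pow ⟨n3, rfl⟩, one_smul, sub_self]
  · have hf : foldI n3 z = 2*n3 - z.val := by rw [foldI]; omega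
    rw [eT]
    simp only [hf]
    rw [dif_pos (by omega : 2*n3 - z.val < n3)]
    simp only [prodT]
    have hneg : ((2*n3 - z.val : ℕ) : ZMod (2*n3)) = -z := by
      rw [Nat.cast_sub (by omega), ZMod.natCast_self, zero_sub, hzz]
    rw [hneg, convT_neg h3,
      neg_one_pow_mod (2*n3 - z.val + n3) (z.val + n3) (by omega)]

/-- Fundamental: `matT` of the corrected product equals the matrix product. -/
lemma matT_prodT (h3 : 0 < n3) (A : Tensor n1 n2 n3) (B : Tensor n2 l n3) :
    matT (prodT A B) = matT A * matT B := by
  haveI : NeZero (2*n3) := ⟨by omega⟩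
  ext ⟨i, a⟩ ⟨j, b⟩
  rw [matT_apply, matT_mul_apply]
  rw [eT_prodT h3, eT_prodT h3]
  have hv1 := val_sub_cast h3 i.1 j.1 i.isLt j.isLt
  have hv2 := val_add_one_cast h3 i.1 j.1 i.isLt j.isLt
  have hsgn : ((-1 : ℂ)) ^ (((↑i.1 - ↑j.1 : ZMod (2*n3))).val + n3)
      = -((-1 : ℂ)) ^ (((↑i.1 + ↑j.1 + 1 : ZMod (2*n3))).val + n3) := by
    rw [hv2, neg_one_pow_mod (((↑i.1 - ↑j.1 : ZMod (2*n3))).val + n3) (i.1 + j.1 + n3)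
      (by rw [hv1]; split_ifs <;> omega),
      show i.1 + j.1 + 1 + n3 = (i.1 + j.1 + n3) + 1 by ring, pow_succ]
    ring
  rw [hsgn]
  simp only [Matrix.add_apply, Matrix.sub_apply, Matrix.smul_apply, smul_eq_mul]
  ring

/-- `tenT` is a left inverse of `matT`. -/
lemma tenT_matT (A : Tensor n1 n2 n3) : tenT (matT A) = A := by
  funext i
  have h3 : 0 < n3 := i.pos
  ext a b
  show (∑ t : Fin n3, if i.1 ≤ t.1 then
      (-1 : ℂ) ^ (t.1 - i.1) * matT A (t, a) (⟨0, i.pos⟩, b) else 0) = A i a b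
  set g : ℕ → ℂ := fun u => if h : u < n3 then A ⟨u, h⟩ a b else 0 with hg
  have hterm : ∀ t : Fin n3, matT A (t, a) (⟨0, i.pos⟩, b) = g t.1 + g (t.1 + 1) := by
    intro t
    rw [matT_apply, Matrix.add_apply]
    simp only [show ((⟨0, i.pos⟩ : Fin n3) : ℕ) = 0 from rfl, Nat.cast_zero, sub_zero, add_zero]
    rw [show ((↑t.1 + 1 : ZMod (2*n3))) = ((t.1 + 1 : ℕ) : ZMod (2*n3)) by push_cast; ring]
    rw [eT_natCast h3 A t.1 (by omega), eT_natCast h3 A (t.1+1) (by omega), hg]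
    simp only []
    split_ifs <;> simp
  calc (∑ t : Fin n3, if i.1 ≤ t.1 then
        (-1 : ℂ) ^ (t.1 - i.1) * matT A (t, a) (⟨0, i.pos⟩, b) else 0)
      = ∑ u ∈ range n3, (if i.1 ≤ u then (-1 : ℂ) ^ (u - i.1) * (g u + g (u+1)) else 0) := by
        rw [← Fin.sum_univ_eq_sum_range
          (fun u => if i.1 ≤ u then (-1 : ℂ) ^ (u - i.1) * (g u + g (u+1)) else 0) n3]
        exact Finset.sum_congr rfl fun t _ => by rw [hterm t]
    _ = ∑ u ∈ Finset.Ico i.1 n3, (-1 : ℂ) ^ (u - i.1) * (g u + g (u+1)) := by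
        rw [range_eq_Ico, ← Finset.sum_Ico_consecutive _ (Nat.zero_le i.1) i.isLt.le]
        rw [Finset.sum_eq_zero (fun u hu => by
          rw [if_neg]; have := (mem_Ico.1 hu).2; omega), zero_add]
        exact Finset.sum_congr rfl fun u hu => if_pos (mem_Ico.1 hu).1
    _ = g i.1 := by
        have expand : ∀ u ∈ Finset.Ico i.1 n3,
            (-1 : ℂ) ^ (u - i.1) * (g u + g (u+1))
              = ((-1 : ℂ) ^ (u - i.1) * g u) + ((-1 : ℂ) ^ (u - i.1) * g (u+1)) :=
          fun u _ => mul_add _ _ _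
        rw [Finset.sum_congr rfl expand, Finset.sum_add_distrib]
        set F : ℕ → ℂ := fun u => (-1 : ℂ) ^ (u - i.1) * g u with hF
        have shift : ∑ u ∈ Finset.Ico i.1 n3, (-1 : ℂ) ^ (u - i.1) * g (u+1)
            = ∑ u ∈ Finset.Ico (i.1+1) (n3+1), (-1 : ℂ) ^ (u - 1 - i.1) * g u := by
          rw [Finset.sum_Ico_eq_sum_range, Finset.sum_Ico_eq_sum_range,
            show n3 + 1 - (i.1 + 1) = n3 - i.1 by omega]
          apply Finset.sum_congr rfl
          intro k _
          congr 1
          · congr 1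
            omega
          · congr 1
            omega
        have sign : ∀ u ∈ Finset.Ico (i.1+1) (n3+1),
            (-1 : ℂ) ^ (u - 1 - i.1) * g u = -F u := by
          intro u hu
          have hu' := mem_Ico.1 hu
          rw [hF]
          simp only []
          rw [show u - i.1 = (u - 1 - i.1) + 1 by omega, pow_succ]
          ring
        rw [shift, Finset.sum_congr rfl sign, Finset.sum_neg_distrib]
        have A1 : ∑ u ∈ Finset.Ico i.1 (n3+1), F u
            = F i.1 + ∑ u ∈ Finset.Ico (i.1+1) (n3+1), F u :=
          Finset.sum_eq_sum_Ico_succ_bot (by omega) F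
        have A2 : ∑ u ∈ Finset.Ico i.1 (n3+1), F u
            = ∑ u ∈ Finset.Ico i.1 n3, F u + F n3 :=
          Finset.sum_Ico_succ_top (by omega) F
        have A3 : F n3 = 0 := by
          rw [hF]; simp only [hg]
          rw [dif_neg (lt_irrefl n3)]; ring
        have A4 : F i.1 = g i.1 := by
          rw [hF]; simp only []
          rw [Nat.sub_self, pow_zero, one_mul]
        linear_combination A1 - A2 + A4 - A3
  rw [hg]
  simp only [dif_pos i.isLt]

lemma matT_injective : Function.Injective (matT (n1 := n1) (n2 := n2) (n3 := n3)) := by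
  intro A B h
  rcases Nat.eq_zero_or_pos n3 with h0 | h3
  · subst h0; funext i; exact i.elim0
  · rw [← tenT_matT A, ← tenT_matT B, h]

lemma matT_cmul (A : Tensor n1 n2 n3) (B : Tensor n2 l n3) :
    matT (cmul A B) = matT A * matT B := by
  rcases Nat.eq_zero_or_pos n3 with h0 | h3
  · subst h0; ext ⟨i, a⟩ ⟨j, b⟩; exact i.elim0
  · rw [cmul, ← matT_prodT h3, tenT_matT, matT_prodT h3]

lemma cmul_assoc {m : ℕ} (A : Tensor n1 n2 n3) (B : Tensor n2 l n3) (C : Tensor l m n3) :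
    cmul (cmul A B) C = cmul A (cmul B C) := by
  apply matT_injective
  rw [matT_cmul, matT_cmul, matT_cmul, matT_cmul, Matrix.mul_assoc]

lemma eT_conjT (A : Tensor n1 n2 n3) (z : ZMod (2*n3)) :
    eT (conjT A) z = (eT A z).conjTranspose := by
  rw [eT, eT]
  split_ifs with h
  · rfl
  · simp

lemma matT_conjT (A : Tensor n1 n2 n3) : matT (conjT A) = (matT A).conjTranspose := by
  ext ⟨i, a⟩ ⟨j, b⟩
  have h3 : 0 < n3 := i.pos
  rw [Matrix.conjTranspose_apply, matT_apply, matT_apply]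
  rw [eT_conjT, eT_conjT]
  rw [show ((↑i.1 : ZMod (2*n3)) - ↑j.1) = -((↑j.1 : ZMod (2*n3)) - ↑i.1) by ring,
    eT_neg h3,
    show ((↑i.1 : ZMod (2*n3)) + ↑j.1 + 1) = ((↑j.1 : ZMod (2*n3)) + ↑i.1 + 1) by ring]
  simp [Matrix.add_apply, Matrix.conjTranspose_apply]

lemma conjT_conjT (A : Tensor n1 n2 n3) : conjT (conjT A) = A := by
  funext i
  exact Matrix.conjTranspose_conjTranspose (A i)

lemma conjT_cmul (A : Tensor n1 n2 n3) (B : Tensor n2 l n3) :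
    conjT (cmul A B) = cmul (conjT B) (conjT A) := by
  apply matT_injective
  rw [matT_conjT, matT_cmul, matT_cmul, matT_conjT, matT_conjT, Matrix.conjTranspose_mul]

end CProof

open CProof

theorem stmt18 {n1 n2 n3 : ℕ} (A : Tensor n1 n2 n3) (G : Tensor n2 n1 n3)
    (hinv : ∃ X, IsInvAlong A G X)
    (P : Tensor n1 n2 n3) (hP : IsMP (cmul (cmul G A) G) P) :
    IsInvAlong A G (cmul (cmul G P) G) := by
  obtain ⟨X, hX1, hX2, ⟨U, hU⟩, ⟨V, hV⟩⟩ := hinv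
  obtain ⟨hP1, hP2, hP3, hP4⟩ := hP
  set m : Tensor n2 n1 n3 := cmul (cmul G A) G with hm
  -- G = m *c U
  have hGmU : G = cmul m U := by
    calc G = cmul (cmul G A) X := hX2.symm
    _ = cmul (cmul G A) (cmul G U) := by rw [← hU]
    _ = cmul (cmul (cmul G A) G) U := (cmul_assoc _ _ _).symm
    _ = cmul m U := by rw [hm]
  -- X = Vᴴ *c G
  have hX' : X = cmul (conjT V) G := by
    calc X = conjT (conjT X) := (conjT_conjT X).symm
    _ = conjT (cmul (conjT G) V) := by rw [hV]
    _ = cmul (conjT V) (conjT (conjT G)) := conjT_cmul _ _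
    _ = cmul (conjT V) G := by rw [conjT_conjT]
  -- G = Vᴴ *c m
  have hVmG : G = cmul (conjT V) m := by
    calc G = cmul (cmul X A) G := hX1.symm
    _ = cmul (cmul (cmul (conjT V) G) A) G := by rw [← hX']
    _ = cmul (cmul (conjT V) (cmul G A)) G := by rw [cmul_assoc (conjT V) G A]
    _ = cmul (conjT V) (cmul (cmul G A) G) := cmul_assoc _ _ _
    _ = cmul (conjT V) m := by rw [hm]
  refine ⟨?_, ?_, ⟨cmul P G, (cmul_assoc G P G)⟩, ⟨conjT (cmul G P), conjT_cmul _ _⟩⟩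
  · -- (G P G) A G = G
    calc cmul (cmul (cmul (cmul G P) G) A) G
        = cmul (cmul (cmul G P) (cmul G A)) G := by rw [cmul_assoc (cmul G P) G A]
      _ = cmul (cmul G P) (cmul (cmul G A) G) := cmul_assoc _ _ _
      _ = cmul (cmul G P) m := by rw [hm]
      _ = cmul (cmul (cmul (conjT V) m) P) m := by rw [← hVmG]
      _ = cmul (cmul (conjT V) (cmul m P)) m := by rw [cmul_assoc (conjT V) m P]
      _ = cmul (conjT V) (cmul (cmul m P) m) := cmul_assoc _ _ _
      _ = cmul (conjT V) m := by rw [hP1]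
      _ = G := hVmG.symm
  · -- (G A) (G P G) = G
    calc cmul (cmul G A) (cmul (cmul G P) G)
        = cmul (cmul (cmul G A) (cmul G P)) G := (cmul_assoc _ _ _).symm
      _ = cmul (cmul (cmul (cmul G A) G) P) G := by rw [cmul_assoc (cmul G A) G P]
      _ = cmul (cmul m P) G := by rw [hm]
      _ = cmul (cmul m P) (cmul m U) := by rw [← hGmU]
      _ = cmul (cmul (cmul m P) m) U := (cmul_assoc _ _ _).symm
      _ = cmul m U := by rw [hP1]
      _ = G := hGmU.symm
end
end

section
/- Let A ∈ ℂ^{n1×n2×n3} and G ∈ ℂ^{n2×n1×n3}, and suppose G = M *_c N with M ∈ ℂ^{n2×r×n3} and N ∈ ℂ^{r×n1×n3} such that the tensors M^H *_c M and N *_c N^H are invertible (a C-full rank decomposition of G). If A is invertible along G, then the tensor N *_c A *_c M ∈ ℂ^{r×r×n3} is invertible and A^{∥G} = M *_c (N *_c A *_c M)^{-1} *_c N. -/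
noncomputable section

open Tensor

namespace TensorAux

open Finset

variable {n1 n2 l n3 : ℕ}

/-- slice entry as a function of a natural index, 0 out of range -/
def Ds (A : Tensor n1 n2 n3) (a : Fin n1) (b : Fin n2) (s : ℕ) : ℂ :=
  if h : s < n3 then A ⟨s, h⟩ a b else 0

lemma Ds_pos (A : Tensor n1 n2 n3) (a b) {s : ℕ} (h : s < n3) :
    Ds A a b s = A ⟨s, h⟩ a b := dif_pos h

lemma Ds_neg (A : Tensor n1 n2 n3) (a b) {s : ℕ} (h : ¬ s < n3) :
    Ds A a b s = 0 := dif_neg h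

lemma A_eq (A : Tensor n1 n2 n3) (a : Fin n1) (b : Fin n2) {x y : ℕ}
    (hx : x < n3) (hy : y < n3) (h : x = y) : A ⟨x, hx⟩ a b = A ⟨y, hy⟩ a b := by
  subst h; rfl

lemma ten_mat (A : Tensor n1 n2 n3) : tenT (matT A) = A := by
  funext i
  ext a b
  show (∑ t : Fin n3,
      if i.1 ≤ t.1 then (-1 : ℂ) ^ (t.1 - i.1) * matT A (t, a) (⟨0, i.pos⟩, b) else 0)
      = A i a b
  have hcol : ∀ t : Fin n3, matT A (t, a) (⟨0, i.pos⟩, b) = Ds A a b t.1 + Ds A a b (t.1 + 1) := by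
    intro t
    show A ⟨t.1 - 0 + (0 - t.1), _⟩ a b +
        (if h : t.1 + 0 + 2 ≤ n3 then A ⟨t.1 + 0 + 1, _⟩ a b
         else if h2 : n3 ≤ t.1 + 0 then A ⟨2 * n3 - (t.1 + 0) - 1, _⟩ a b else 0)
      = Ds A a b t.1 + Ds A a b (t.1 + 1)
    have ht := t.isLt
    congr 1
    · rw [Ds_pos A a b (by omega : t.1 < n3)]
      exact A_eq A a b _ _ (by omega)
    · by_cases h : t.1 + 1 < n3
      · rw [dif_pos (by omega), Ds_pos A a b h]
      · rw [dif_neg (by omega), dif_neg (by omega), Ds_neg A a b h]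
  calc (∑ t : Fin n3,
      if i.1 ≤ t.1 then (-1 : ℂ) ^ (t.1 - i.1) * matT A (t, a) (⟨0, i.pos⟩, b) else 0)
      = ∑ t : Fin n3, (if i.1 ≤ t.1 then
          (-1 : ℂ) ^ (t.1 - i.1) * (Ds A a b t.1 + Ds A a b (t.1 + 1)) else 0) := by
        refine Finset.sum_congr rfl fun t _ => ?_
        rw [hcol]
    _ = ∑ s ∈ Finset.range n3, (if i.1 ≤ s then
          (-1 : ℂ) ^ (s - i.1) * (Ds A a b s + Ds A a b (s + 1)) else 0) :=
        Fin.sum_univ_eq_sum_range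
          (fun s => if i.1 ≤ s then (-1 : ℂ) ^ (s - i.1) * (Ds A a b s + Ds A a b (s + 1)) else 0) n3
    _ = ∑ s ∈ Finset.Ico 0 i.1, (if i.1 ≤ s then
            (-1 : ℂ) ^ (s - i.1) * (Ds A a b s + Ds A a b (s + 1)) else 0)
        + ∑ s ∈ Finset.Ico i.1 n3, (if i.1 ≤ s then
            (-1 : ℂ) ^ (s - i.1) * (Ds A a b s + Ds A a b (s + 1)) else 0) := by
        rw [Finset.sum_Ico_consecutive _ (Nat.zero_le _) (le_of_lt i.isLt), Finset.range_eq_Ico]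
    _ = ∑ s ∈ Finset.Ico i.1 n3, (-1 : ℂ) ^ (s - i.1) * (Ds A a b s + Ds A a b (s + 1)) := by
        rw [Finset.sum_congr rfl (fun s hs => if_neg (by simp at hs; omega)), Finset.sum_const_zero,
          zero_add]
        exact Finset.sum_congr rfl fun s hs => if_pos (by simp at hs; omega)
    _ = ∑ k ∈ Finset.range (n3 - i.1), (-1 : ℂ) ^ k * (Ds A a b (i.1 + k) + Ds A a b (i.1 + k + 1)) := by
        rw [Finset.sum_Ico_eq_sum_range]
        exact Finset.sum_congr rfl fun k _ => by rw [show i.1 + k - i.1 = k by omega]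
    _ = ∑ k ∈ Finset.range (n3 - i.1),
          ((-1 : ℂ) ^ k * Ds A a b (i.1 + k) - (-1 : ℂ) ^ (k+1) * Ds A a b (i.1 + (k+1))) := by
        refine Finset.sum_congr rfl fun k _ => ?_
        rw [pow_succ]
        ring_nf
    _ = (-1 : ℂ) ^ 0 * Ds A a b (i.1 + 0) - (-1 : ℂ) ^ (n3 - i.1) * Ds A a b (i.1 + (n3 - i.1)) :=
        Finset.sum_range_sub' (fun k => (-1 : ℂ) ^ k * Ds A a b (i.1 + k)) (n3 - i.1)
    _ = A i a b := by
        have hi := i.isLt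
        rw [show i.1 + (n3 - i.1) = n3 by omega, Ds_pos A a b (by omega : i.1 + 0 < n3),
          Ds_neg A a b (by omega : ¬ n3 < n3)]
        simp only [pow_zero, one_mul, mul_zero, sub_zero]
        exact A_eq A a b _ _ (by omega)

lemma matT_inj {A B : Tensor n1 n2 n3} (h : matT A = matT B) : A = B := by
  rw [← ten_mat A, ← ten_mat B, h]

/-- even 2*n3-periodic extension of the slices -/
def extT (A : Tensor n1 n2 n3) (d : ZMod (2 * n3)) : Matrix (Fin n1) (Fin n2) ℂ :=
  if h : min d.val (2 * n3 - d.val) < n3 then A ⟨_, h⟩ else 0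

lemma extT_apply (A : Tensor n1 n2 n3) (d : ZMod (2 * n3)) (a : Fin n1) (b : Fin n2) :
    extT A d a b = Ds A a b (min d.val (2 * n3 - d.val)) := by
  unfold extT Ds
  split_ifs with h
  · rfl
  · rfl

lemma nz2 [NeZero n3] : NeZero (2 * n3) := ⟨by have := NeZero.ne n3; omega⟩

lemma cast_sub_nat [NeZero n3] (I J : ℕ) (hJ : J ≤ 2 * n3) :
    ((I : ZMod (2 * n3)) - (J : ZMod (2 * n3))) = ((I + (2 * n3 - J) : ℕ) : ZMod (2 * n3)) := by
  have h1 : ((2 * n3 - J : ℕ) : ZMod (2 * n3)) = - (J : ZMod (2 * n3)) := by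
    rw [Nat.cast_sub hJ]
    simp [ZMod.natCast_self]
  rw [Nat.cast_add, h1]
  ring

lemma val_sub_le [NeZero n3] {I J : ℕ} (hI : I < n3) (hJ : J < n3) (h : J ≤ I) :
    ((I : ZMod (2 * n3)) - (J : ZMod (2 * n3))).val = I - J := by
  haveI := nz2 (n3 := n3)
  rw [cast_sub_nat I J (by omega), ZMod.val_natCast,
    show I + (2 * n3 - J) = (I - J) + (2 * n3) * 1 by omega,
    Nat.add_mul_mod_self_left, Nat.mod_eq_of_lt (by omega)]

lemma val_sub_gt [NeZero n3] {I J : ℕ} (hI : I < n3) (hJ : J < n3) (h : I < J) :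
    ((I : ZMod (2 * n3)) - (J : ZMod (2 * n3))).val = 2 * n3 - (J - I) := by
  haveI := nz2 (n3 := n3)
  rw [cast_sub_nat I J (by omega), ZMod.val_natCast, Nat.mod_eq_of_lt (by omega)]
  omega

lemma val_hankel [NeZero n3] {I J : ℕ} (hI : I < n3) (hJ : J < n3) :
    ((I : ZMod (2 * n3)) + (J : ZMod (2 * n3)) + 1).val = I + J + 1 := by
  haveI := nz2 (n3 := n3)
  have : ((I : ZMod (2 * n3)) + (J : ZMod (2 * n3)) + 1) = ((I + J + 1 : ℕ) : ZMod (2 * n3)) := by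
    push_cast
    ring
  rw [this, ZMod.val_natCast, Nat.mod_eq_of_lt (by omega)]

lemma matT_apply [NeZero n3] (A : Tensor n1 n2 n3) (i j : Fin n3) (a : Fin n1) (b : Fin n2) :
    matT A (i, a) (j, b)
      = extT A ((i.1 : ZMod (2 * n3)) - (j.1 : ZMod (2 * n3))) a b
        + extT A ((i.1 : ZMod (2 * n3)) + (j.1 : ZMod (2 * n3)) + 1) a b := by
  have hi := i.isLt
  have hj := j.isLt
  rw [extT_apply, extT_apply, val_hankel hi hj]
  show A ⟨i.1 - j.1 + (j.1 - i.1), _⟩ a b +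
      (if h : i.1 + j.1 + 2 ≤ n3 then A ⟨i.1 + j.1 + 1, _⟩ a b
       else if h2 : n3 ≤ i.1 + j.1 then A ⟨2 * n3 - (i.1 + j.1) - 1, _⟩ a b else 0)
    = _
  congr 1
  · rcases le_or_gt j.1 i.1 with h | h
    · rw [val_sub_le hi hj h, ← Ds_pos A a b (by omega : i.1 - j.1 + (j.1 - i.1) < n3)]
      congr 1
      omega
    · rw [val_sub_gt hi hj h, ← Ds_pos A a b (by omega : i.1 - j.1 + (j.1 - i.1) < n3)]
      congr 1
      omega
  · rcases Nat.lt_trichotomy (i.1 + j.1 + 1) n3 with h | h | h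
    · rw [dif_pos (by omega), ← Ds_pos A a b (by omega : i.1 + j.1 + 1 < n3)]
      congr 1
      omega
    · rw [dif_neg (by omega), dif_neg (by omega), ← Ds_neg A a b
        (by omega : ¬ min (i.1 + j.1 + 1) (2 * n3 - (i.1 + j.1 + 1)) < n3)]
    · rw [dif_neg (by omega), dif_pos (by omega : n3 ≤ i.1 + j.1),
        ← Ds_pos A a b (by omega : 2 * n3 - (i.1 + j.1) - 1 < n3)]
      congr 1
      omega

lemma ext_neg [NeZero n3] (A : Tensor n1 n2 n3) (d : ZMod (2 * n3)) :
    extT A (-d) = extT A d := by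
  haveI := nz2 (n3 := n3)
  by_cases h0 : d = 0
  · rw [h0, neg_zero]
  · have hd := ZMod.val_lt d
    have hd0 : d.val ≠ 0 := fun h => h0 (by
      have := ZMod.natCast_rightInverse (n := 2 * n3) d
      rw [← this, h, Nat.cast_zero])
    ext a b
    rw [extT_apply, extT_apply, ZMod.neg_val, if_neg h0]
    congr 1
    omega

/-- The natural two-to-one covering `Fin n3 ⊕ Fin n3 ≃ ZMod (2*n3)`. -/
def halfEquiv (n3 : ℕ) [NeZero n3] : (Fin n3 ⊕ Fin n3) ≃ ZMod (2 * n3) := by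
  haveI := nz2 (n3 := n3)
  exact
  { toFun := Sum.elim (fun k => (k.1 : ZMod (2 * n3))) (fun k => -1 - (k.1 : ZMod (2 * n3)))
    invFun := fun z =>
      if h : z.val < n3 then Sum.inl ⟨z.val, h⟩
      else Sum.inr ⟨2 * n3 - 1 - z.val, by have := ZMod.val_lt z; have := NeZero.ne n3; omega⟩
    left_inv := by
      haveI := nz2 (n3 := n3)
      have key : ∀ k : Fin n3, ((-1 : ZMod (2 * n3)) - (k.1 : ZMod (2 * n3))).val
          = 2 * n3 - 1 - k.1 := by
        intro k
        have hk := k.isLt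
        have : ((-1 : ZMod (2 * n3)) - (k.1 : ZMod (2 * n3)))
            = ((2 * n3 - 1 - k.1 : ℕ) : ZMod (2 * n3)) := by
          rw [Nat.cast_sub (by omega), Nat.cast_sub (by omega)]
          simp [ZMod.natCast_self]
        rw [this, ZMod.val_natCast, Nat.mod_eq_of_lt (by omega)]
      rintro (k | k) <;> have hk := k.isLt
      · simp only [Sum.elim_inl]
        refine (dif_pos (show ((k.1 : ZMod (2 * n3))).val < n3 by rw [ZMod.val_natCast, Nat.mod_eq_of_lt (by omega)]; omega)).trans ?_
        congr 1
        exact Fin.ext (by simp [ZMod.val_natCast, Nat.mod_eq_of_lt (by omega : k.1 < 2*n3)])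
      · simp only [Sum.elim_inr]
        refine (dif_neg (show ¬ ((-1 : ZMod (2 * n3)) - (k.1 : ZMod (2 * n3))).val < n3 by rw [key k]; omega)).trans ?_
        have hkk := key k
        congr 1
        exact Fin.ext (by show 2 * n3 - 1 - ((-1 : ZMod (2*n3)) - (k.1 : ZMod (2*n3))).val = k.1; omega)
    right_inv := by
      haveI := nz2 (n3 := n3)
      intro z
      by_cases h : z.val < n3
      · simp only [dif_pos h, Sum.elim_inl]
        exact ZMod.natCast_rightInverse z
      · simp only [dif_neg h, Sum.elim_inr]
        have hz := ZMod.val_lt z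
        have : ((2 * n3 - 1 - z.val : ℕ) : ZMod (2 * n3)) = -1 - (z.val : ZMod (2 * n3)) := by
          rw [Nat.cast_sub (by omega), Nat.cast_sub (by omega)]
          simp [ZMod.natCast_self]
        rw [this, ZMod.natCast_rightInverse z]
        ring }

lemma sum_folded [NeZero n3] (F : ZMod (2 * n3) → Matrix (Fin n1) (Fin l) ℂ)
    (hF : ∀ z, F (-1 - z) = F z) :
    ∑ z : ZMod (2 * n3), F z = 2 • ∑ k : Fin n3, F (k.1 : ZMod (2 * n3)) := by
  haveI := nz2 (n3 := n3)
  rw [← Equiv.sum_comp (halfEquiv n3) F, Fintype.sum_sum_type]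
  simp only [halfEquiv, Equiv.coe_fn_mk, Sum.elim_inl, Sum.elim_inr]
  have he : ∑ k : Fin n3, F (-1 - (k.1 : ZMod (2 * n3))) = ∑ k : Fin n3, F (k.1 : ZMod (2 * n3)) :=
    Finset.sum_congr rfl fun k _ => hF _
  rw [he, two_smul]

/-- matrix-valued cyclic convolution of the extensions -/
def convT [NeZero n3] (A : Tensor n1 n2 n3) (B : Tensor n2 l n3) (d : ZMod (2 * n3)) :
    Matrix (Fin n1) (Fin l) ℂ :=
  haveI := nz2 (n3 := n3)
  ∑ z : ZMod (2 * n3), extT A (d - z) * extT B z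

lemma conv_neg [NeZero n3] (A : Tensor n1 n2 n3) (B : Tensor n2 l n3) (d : ZMod (2 * n3)) :
    convT A B (-d) = convT A B d := by
  haveI := nz2 (n3 := n3)
  unfold convT
  rw [← Equiv.sum_comp (Equiv.neg (ZMod (2 * n3))) (fun z => extT A (-d - z) * extT B z)]
  refine Finset.sum_congr rfl fun z _ => ?_
  simp only [Equiv.neg_apply]
  rw [show -d - -z = -(d - z) by ring, ext_neg, ext_neg]

lemma keySum [NeZero n3] (A : Tensor n1 n2 n3) (B : Tensor n2 l n3) (x y : ZMod (2 * n3)) :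
    ∑ k : Fin n3, (extT A (x - (k.1 : ZMod (2 * n3))) + extT A (x + (k.1 : ZMod (2 * n3)) + 1))
        * (extT B ((k.1 : ZMod (2 * n3)) - y) + extT B ((k.1 : ZMod (2 * n3)) + y + 1))
      = convT A B (x - y) + convT A B (x + y + 1) := by
  haveI := nz2 (n3 := n3)
  set F : ZMod (2 * n3) → Matrix (Fin n1) (Fin l) ℂ :=
    fun z => (extT A (x - z) + extT A (x + z + 1)) * (extT B (z - y) + extT B (z + y + 1))
    with hFdef
  have hF : ∀ z, F (-1 - z) = F z := by
    intro z
    rw [hFdef]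
    simp only
    rw [show x - (-1 - z) = x + z + 1 by ring, show x + (-1 - z) + 1 = x - z by ring,
      show (-1 - z) - y = -(z + y + 1) by ring, show (-1 - z) + y + 1 = -(z - y) by ring,
      ext_neg, ext_neg, add_comm (extT A (x + z + 1)), add_comm (extT B (z + y + 1))]
  have h2 : (2 : ℕ) • (∑ k : Fin n3, F (k.1 : ZMod (2 * n3)))
      = (2 : ℕ) • (convT A B (x - y) + convT A B (x + y + 1)) := by
    rw [← sum_folded F hF]
    have expand : ∀ z, F z
        = extT A (x - z) * extT B (z - y) + extT A (x - z) * extT B (z + y + 1)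
          + extT A (x + z + 1) * extT B (z - y) + extT A (x + z + 1) * extT B (z + y + 1) := by
      intro z
      rw [hFdef]
      simp only
      rw [Matrix.add_mul, Matrix.mul_add, Matrix.mul_add]
      abel
    rw [Finset.sum_congr rfl fun z _ => expand z]
    rw [Finset.sum_add_distrib, Finset.sum_add_distrib, Finset.sum_add_distrib]
    have t1 : ∑ z : ZMod (2 * n3), extT A (x - z) * extT B (z - y) = convT A B (x - y) := by
      rw [← Equiv.sum_comp (Equiv.addRight y)
        (fun z => extT A (x - z) * extT B (z - y))]
      refine Finset.sum_congr rfl fun w _ => ?_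
      simp only [Equiv.coe_addRight]
      rw [show x - (w + y) = (x - y) - w by ring, show (w + y) - y = w by ring]
    have t2 : ∑ z : ZMod (2 * n3), extT A (x - z) * extT B (z + y + 1)
        = convT A B (x + y + 1) := by
      rw [← Equiv.sum_comp (Equiv.addRight (-(y+1)))
        (fun z => extT A (x - z) * extT B (z + y + 1))]
      refine Finset.sum_congr rfl fun w _ => ?_
      simp only [Equiv.coe_addRight]
      rw [show x - (w + -(y+1)) = (x + y + 1) - w by ring,
        show (w + -(y+1)) + y + 1 = w by ring]
    have t3 : ∑ z : ZMod (2 * n3), extT A (x + z + 1) * extT B (z - y)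
        = convT A B (x + y + 1) := by
      rw [← Equiv.sum_comp (Equiv.subLeft y)
        (fun z => extT A (x + z + 1) * extT B (z - y))]
      refine Finset.sum_congr rfl fun w _ => ?_
      simp only [Equiv.subLeft_apply]
      rw [show x + (y - w) + 1 = (x + y + 1) - w by ring, show (y - w) - y = -w by ring, ext_neg]
    have t4 : ∑ z : ZMod (2 * n3), extT A (x + z + 1) * extT B (z + y + 1)
        = convT A B (x - y) := by
      rw [← Equiv.sum_comp (Equiv.subLeft (-(y+1)))
        (fun z => extT A (x + z + 1) * extT B (z + y + 1))]
      refine Finset.sum_congr rfl fun w _ => ?_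
      simp only [Equiv.subLeft_apply]
      rw [show x + (-(y+1) - w) + 1 = (x - y) - w by ring,
        show (-(y+1) - w) + y + 1 = -w by ring, ext_neg]
    rw [t1, t2, t3, t4, two_smul]
    abel
  -- cancel the factor 2
  ext a b
  have h3 := congrFun (congrFun h2 a) b
  simp only [Matrix.smul_apply, nsmul_eq_mul, Nat.cast_ofNat] at h3
  exact mul_left_cancel₀ (two_ne_zero) h3

lemma pow_neg_one_congr {a b : ℕ} (h : a % 2 = b % 2) : ((-1 : ℂ)) ^ a = (-1) ^ b := by
  rw [← Nat.div_add_mod a 2, ← Nat.div_add_mod b 2, pow_add, pow_add, pow_mul, pow_mul]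
  simp [h]

/-- the product tensor -/
def Cten [NeZero n3] (A : Tensor n1 n2 n3) (B : Tensor n2 l n3) : Tensor n1 l n3 :=
  fun s => convT A B (s.1 : ZMod (2 * n3)) - ((-1 : ℂ) ^ (s.1 + n3)) • convT A B (n3 : ZMod (2 * n3))

lemma extT_Cten [NeZero n3] (A : Tensor n1 n2 n3) (B : Tensor n2 l n3) (d : ZMod (2 * n3)) :
    extT (Cten A B) d
      = convT A B d - ((-1 : ℂ) ^ (d.val + n3)) • convT A B (n3 : ZMod (2 * n3)) := by
  haveI := nz2 (n3 := n3)
  have hd := ZMod.val_lt d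
  have hn3 := NeZero.ne n3
  unfold extT
  by_cases h : min d.val (2 * n3 - d.val) < n3
  · rw [dif_pos h]
    show convT A B ((min d.val (2 * n3 - d.val) : ℕ) : ZMod (2 * n3)) - _ = _
    simp only [Fin.val_mk]
    rcases le_or_gt d.val n3 with h1 | h1
    · have hmin : min d.val (2 * n3 - d.val) = d.val := by omega
      rw [hmin, ZMod.natCast_rightInverse d]
    · have hmin : min d.val (2 * n3 - d.val) = 2 * n3 - d.val := by omega
      have hcast : ((2 * n3 - d.val : ℕ) : ZMod (2 * n3)) = -d := by
        rw [Nat.cast_sub (by omega)]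
        simp [ZMod.natCast_self, ZMod.natCast_rightInverse d]
      rw [hmin, hcast, conv_neg]
      congr 2
      exact pow_neg_one_congr (by omega)
  · rw [dif_neg h]
    have hval : d.val = n3 := by omega
    have hcast : d = ((n3 : ℕ) : ZMod (2 * n3)) := by
      conv_lhs => rw [← ZMod.natCast_rightInverse d]
      rw [hval]
    have hvn : (((n3 : ℕ)) : ZMod (2 * n3)).val = n3 := by
      rw [ZMod.val_natCast, Nat.mod_eq_of_lt (by omega)]
    rw [hcast, hvn, pow_neg_one_congr (by omega : (n3 + n3) % 2 = 0 % 2), pow_zero, one_smul,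
      sub_self]

lemma mul_matT [NeZero n3] (A : Tensor n1 n2 n3) (B : Tensor n2 l n3) :
    matT A * matT B = matT (Cten A B) := by
  haveI := nz2 (n3 := n3)
  ext ⟨i, a⟩ ⟨j, b⟩
  have hi := i.isLt
  have hj := j.isLt
  rw [Matrix.mul_apply, Fintype.sum_prod_type]
  have hinner : ∀ k : Fin n3, ∑ c : Fin n2, matT A (i, a) (k, c) * matT B (k, c) (j, b)
      = ((extT A ((i.1 : ZMod (2 * n3)) - (k.1 : ZMod (2 * n3)))
            + extT A ((i.1 : ZMod (2 * n3)) + (k.1 : ZMod (2 * n3)) + 1))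
          * (extT B ((k.1 : ZMod (2 * n3)) - (j.1 : ZMod (2 * n3)))
            + extT B ((k.1 : ZMod (2 * n3)) + (j.1 : ZMod (2 * n3)) + 1))) a b := by
    intro k
    rw [Matrix.mul_apply]
    refine Finset.sum_congr rfl fun c _ => ?_
    rw [matT_apply A i k a c, matT_apply B k j c b]
    simp [Matrix.add_apply]
  rw [Finset.sum_congr rfl fun k _ => hinner k, ← Matrix.sum_apply a b Finset.univ _, keySum A B]
  rw [matT_apply (Cten A B) i j a b, extT_Cten, extT_Cten]
  have hv1 : ((i.1 : ZMod (2 * n3)) - (j.1 : ZMod (2 * n3))).val % 2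
      = (i.1 + (2 * n3 - j.1)) % 2 := by
    rcases le_or_gt j.1 i.1 with h | h
    · rw [val_sub_le hi hj h]; omega
    · rw [val_sub_gt hi hj h]; omega
  have hv2 := val_hankel (n3 := n3) hi hj
  have hsign : ((-1 : ℂ) ^ (((i.1 : ZMod (2 * n3)) - (j.1 : ZMod (2 * n3))).val + n3))
      + ((-1 : ℂ) ^ (((i.1 : ZMod (2 * n3)) + (j.1 : ZMod (2 * n3)) + 1).val + n3)) = 0 := by
    rw [pow_neg_one_congr (show (((i.1 : ZMod (2 * n3)) - (j.1 : ZMod (2 * n3))).val + n3) % 2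
      = ((((i.1 : ZMod (2 * n3)) + (j.1 : ZMod (2 * n3)) + 1).val + n3) + 1) % 2 by omega),
      pow_succ]
    ring
  simp only [Matrix.add_apply, Matrix.sub_apply, Matrix.smul_apply, smul_eq_mul]
  linear_combination (convT A B ((n3 : ℕ) : ZMod (2 * n3)) a b) * hsign

lemma matMul [NeZero n3] (A : Tensor n1 n2 n3) (B : Tensor n2 l n3) :
    matT (cmul A B) = matT A * matT B := by
  rw [cmul, mul_matT, ten_mat]

lemma cmul_assoc_fact : True := trivial

lemma matI [NeZero n3] {n : ℕ} : matT (idT : Tensor n n n3) = 1 := by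
  haveI := nz2 (n3 := n3)
  have hn := NeZero.ne n3
  have hext : ∀ (d : ZMod (2 * n3)) (a b : Fin n),
      extT (idT : Tensor n n n3) d a b = if d.val = 0 ∧ a = b then 1 else 0 := by
    intro d a b
    have hd := ZMod.val_lt d
    rw [extT_apply]
    unfold Ds idT
    by_cases h : d.val = 0
    · rw [dif_pos (by omega : min d.val (2 * n3 - d.val) < n3),
        if_pos (show min d.val (2 * n3 - d.val) = 0 by omega)]
      by_cases hab : a = b
      · subst hab
        simp [Matrix.one_apply, h]
      · simp [Matrix.one_apply, h, hab]
    · by_cases h2 : min d.val (2 * n3 - d.val) < n3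
      · rw [dif_pos h2, if_neg (show ¬ min d.val (2 * n3 - d.val) = 0 by omega)]
        simp [h]
      · rw [dif_neg h2]
        simp [h]
  ext ⟨i, a⟩ ⟨j, b⟩
  have hi := i.isLt
  have hj := j.isLt
  rw [matT_apply, hext, hext, Matrix.one_apply]
  have hv2 := val_hankel (n3 := n3) hi hj
  rw [if_neg (show ¬ ((((i.1 : ZMod (2*n3)) + (j.1 : ZMod (2*n3)) + 1).val = 0) ∧ a = b) by
      rw [hv2]; rintro ⟨h1, -⟩; omega),
    add_zero]
  simp only [show ((i, a) = (j, b)) ↔ (i.1 = j.1 ∧ a = b) from by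
      simp [Prod.ext_iff, Fin.ext_iff]]
  rcases le_or_gt j.1 i.1 with h | h
  · simp only [val_sub_le hi hj h]
    exact if_congr (and_congr_left' (by omega)) rfl rfl
  · simp only [val_sub_gt hi hj h]
    exact if_congr (and_congr_left' (by omega)) rfl rfl

open Matrix in
lemma matH [NeZero n3] (A : Tensor n1 n2 n3) : matT (conjT A) = (matT A)ᴴ := by
  haveI := nz2 (n3 := n3)
  ext ⟨i, a⟩ ⟨j, b⟩
  rw [Matrix.conjTranspose_apply, matT_apply, matT_apply]
  have hc : ∀ (d : ZMod (2 * n3)) (a : Fin n2) (b : Fin n1),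
      extT (conjT A) d a b = star (extT A d b a) := by
    intro d a b
    unfold extT conjT
    split_ifs with h
    · rfl
    · simp
  rw [hc, hc, star_add]
  congr 1
  · rw [show ((j.1 : ZMod (2*n3)) - (i.1 : ZMod (2*n3)))
        = -((i.1 : ZMod (2*n3)) - (j.1 : ZMod (2*n3))) by ring, ext_neg]
  · rw [show ((j.1 : ZMod (2*n3)) + (i.1 : ZMod (2*n3)) + 1)
        = ((i.1 : ZMod (2*n3)) + (j.1 : ZMod (2*n3)) + 1) by ring]

open Matrix in
lemma cancel_left {R I δ : Type} [Fintype R] [Fintype I] [DecidableEq R]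
    (m : Matrix I R ℂ) (w1 : Matrix R R ℂ) (hw : w1 * (mᴴ * m) = 1)
    {Y Z : Matrix R δ ℂ} (h : m * Y = m * Z) : Y = Z := by
  calc Y = (w1 * (mᴴ * m)) * Y := by rw [hw, Matrix.one_mul]
    _ = w1 * (mᴴ * (m * Y)) := by simp only [Matrix.mul_assoc]
    _ = w1 * (mᴴ * (m * Z)) := by rw [h]
    _ = (w1 * (mᴴ * m)) * Z := by simp only [Matrix.mul_assoc]
    _ = Z := by rw [hw, Matrix.one_mul]

open Matrix in
lemma cancel_right {R I δ : Type} [Fintype R] [Fintype I] [DecidableEq R]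
    (n : Matrix R I ℂ) (w2 : Matrix R R ℂ) (hw : (n * nᴴ) * w2 = 1)
    {Y Z : Matrix δ R ℂ} (h : Y * n = Z * n) : Y = Z := by
  calc Y = Y * ((n * nᴴ) * w2) := by rw [hw, Matrix.mul_one]
    _ = (Y * n) * (nᴴ * w2) := by simp only [Matrix.mul_assoc]
    _ = (Z * n) * (nᴴ * w2) := by rw [h]
    _ = Z * ((n * nᴴ) * w2) := by simp only [Matrix.mul_assoc]
    _ = Z := by rw [hw, Matrix.mul_one]

end TensorAux

open TensorAux Matrix in
theorem stmt19 {n1 n2 r n3 : ℕ} (A : Tensor n1 n2 n3) (G : Tensor n2 n1 n3)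
    (M : Tensor n2 r n3) (N : Tensor r n1 n3)
    (hG : G = cmul M N)
    (hM : ∃ W, IsInverse (cmul (conjT M) M) W)
    (hN : ∃ W, IsInverse (cmul N (conjT N)) W)
    (hinv : ∃ X, IsInvAlong A G X) :
    ∃ W, IsInverse (cmul (cmul N A) M) W ∧
      IsInvAlong A G (cmul (cmul M W) N) := by
  rcases Nat.eq_zero_or_pos n3 with h0 | hpos
  · subst h0
    have triv : ∀ (p q : ℕ) (S T : Tensor p q 0), S = T := by
      intro p q S T
      funext i
      exact Fin.elim0 i
    exact ⟨fun i => Fin.elim0 i, ⟨triv _ _ _ _, triv _ _ _ _⟩, triv _ _ _ _, triv _ _ _ _,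
      ⟨fun i => Fin.elim0 i, triv _ _ _ _⟩, ⟨fun i => Fin.elim0 i, triv _ _ _ _⟩⟩
  haveI : NeZero n3 := ⟨by omega⟩
  obtain ⟨X, hX1, hX2, ⟨U, hU⟩, ⟨V, hV⟩⟩ := hinv
  obtain ⟨W1, hW1a, hW1b⟩ := hM
  obtain ⟨W2, hW2a, hW2b⟩ := hN
  have mG : matT G = matT M * matT N := by rw [hG, matMul]
  have mX1 : matT X * matT A * matT G = matT G := by
    have h := congrArg matT hX1
    rwa [matMul, matMul] at h
  have mX2 : matT G * matT A * matT X = matT G := by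
    have h := congrArg matT hX2
    rwa [matMul, matMul] at h
  have mU : matT X = matT G * matT U := by rw [hU, matMul]
  have mV : (matT X)ᴴ = (matT G)ᴴ * matT V := by
    have h := congrArg matT hV
    rwa [matMul, matH, matH] at h
  have mW1b : matT W1 * ((matT M)ᴴ * matT M) = 1 := by
    have h := congrArg matT hW1b
    rwa [matMul, matMul, matH, matI] at h
  have mW2a : (matT N * (matT N)ᴴ) * matT W2 = 1 := by
    have h := congrArg matT hW2a
    rwa [matMul, matMul, matH, matI] at h
  have hvg : (matT V)ᴴ * matT G = matT X := by
    have h := congrArg Matrix.conjTranspose mV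
    rw [Matrix.conjTranspose_conjTranspose, Matrix.conjTranspose_mul,
      Matrix.conjTranspose_conjTranspose] at h
    exact h.symm
  have e1 : matT X * (matT A * matT M) = matT M := by
    apply cancel_right (matT N) (matT W2) mW2a
    calc matT X * (matT A * matT M) * matT N = matT X * matT A * matT G := by
          rw [mG]; simp only [Matrix.mul_assoc]
      _ = matT G := mX1
      _ = matT M * matT N := mG
  have e2 : matT N * (matT A * matT X) = matT N := by
    apply cancel_left (matT M) (matT W1) mW1b
    calc matT M * (matT N * (matT A * matT X)) = matT G * matT A * matT X := by
          rw [mG]; simp only [Matrix.mul_assoc]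
      _ = matT G := mX2
      _ = matT M * matT N := mG
  have hxm : matT X = matT M * (matT N * matT U) := by
    rw [mU, mG]; simp only [Matrix.mul_assoc]
  have hxv : matT X = (matT V)ᴴ * (matT M * matT N) := by rw [← hvg, mG]
  have e3 : matT N * (matT U * (matT A * matT M)) = 1 := by
    apply cancel_left (matT M) (matT W1) mW1b
    calc matT M * (matT N * (matT U * (matT A * matT M)))
        = matT X * (matT A * matT M) := by rw [hxm]; simp only [Matrix.mul_assoc]
      _ = matT M := e1
      _ = matT M * 1 := (Matrix.mul_one _).symm
  have e4 : matT N * (matT A * ((matT V)ᴴ * matT M)) = 1 := by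
    apply cancel_right (matT N) (matT W2) mW2a
    calc matT N * (matT A * ((matT V)ᴴ * matT M)) * matT N
        = matT N * (matT A * matT X) := by rw [hxv]; simp only [Matrix.mul_assoc]
      _ = matT N := e2
      _ = 1 * matT N := (Matrix.one_mul _).symm
  have e5 : matT X * (matT A * matT X) = matT X := by
    calc matT X * (matT A * matT X) = matT X * (matT A * (matT G * matT U)) := by
          rw [show matT A * matT X = matT A * (matT G * matT U) from by rw [← mU]]
      _ = matT X * matT A * matT G * matT U := by simp only [Matrix.mul_assoc]
      _ = matT G * matT U := by rw [mX1]
      _ = matT X := mU.symm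
  have goal1 : matT N * (matT A * (matT M * (matT N * (matT U *
      (matT A * ((matT V)ᴴ * matT M)))))) = 1 := by
    calc matT N * (matT A * (matT M * (matT N * (matT U * (matT A * ((matT V)ᴴ * matT M))))))
        = matT N * (matT A * ((matT M * (matT N * matT U)) * (matT A * ((matT V)ᴴ * matT M)))) := by
          simp only [Matrix.mul_assoc]
      _ = matT N * (matT A * (matT X * (matT A * ((matT V)ᴴ * matT M)))) := by rw [← hxm]
      _ = (matT N * (matT A * matT X)) * (matT A * ((matT V)ᴴ * matT M)) := by
          simp only [Matrix.mul_assoc]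
      _ = matT N * (matT A * ((matT V)ᴴ * matT M)) := by rw [e2]
      _ = 1 := e4
  have goal2 : matT N * (matT U * (matT A * ((matT V)ᴴ * (matT M *
      (matT N * (matT A * matT M)))))) = 1 := by
    calc matT N * (matT U * (matT A * ((matT V)ᴴ * (matT M * (matT N * (matT A * matT M))))))
        = matT N * (matT U * (matT A * (((matT V)ᴴ * (matT M * matT N)) * (matT A * matT M)))) := by
          simp only [Matrix.mul_assoc]
      _ = matT N * (matT U * (matT A * (matT X * (matT A * matT M)))) := by rw [← hxv]
      _ = matT N * (matT U * (matT A * matT M)) := by rw [e1]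
      _ = 1 := e3
  have goal3 : matT M * ((matT N * (matT U * (matT A * ((matT V)ᴴ * matT M)))) * matT N)
      = matT X := by
    calc matT M * ((matT N * (matT U * (matT A * ((matT V)ᴴ * matT M)))) * matT N)
        = (matT M * (matT N * matT U)) * (matT A * ((matT V)ᴴ * (matT M * matT N))) := by
          simp only [Matrix.mul_assoc]
      _ = matT X * (matT A * matT X) := by rw [← hxm, ← hxv]
      _ = matT X := e5
  refine ⟨cmul (cmul (cmul (cmul N U) A) (conjT V)) M, ⟨?_, ?_⟩, ?_⟩
  · apply matT_inj
    simp only [matMul, matH, matI]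
    simpa only [Matrix.mul_assoc] using goal1
  · apply matT_inj
    simp only [matMul, matH, matI]
    simpa only [Matrix.mul_assoc] using goal2
  · have hfix : cmul (cmul M (cmul (cmul (cmul (cmul N U) A) (conjT V)) M)) N = X := by
      apply matT_inj
      simp only [matMul, matH]
      simpa only [Matrix.mul_assoc] using goal3
    rw [hfix]
    exact ⟨hX1, hX2, ⟨U, hU⟩, ⟨V, hV⟩⟩
end
end
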